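/- Let (T, θ) be a balanced and stratified staged tree and let T' be the tree obtained from T by contracting the edges in E_1 = {e : e is the unique outgoing edge of its source}. Then (T', θ) (with labels of contracted edges specialized to 1) is also balanced. -/

import Mathlib

open MvPolynomial

inductive STree (L : Type) where
  | leaf : STree L
  | node : List (L × STree L) → STree L

namespace STree

variable {L : Type}

def children : STree L → List (L × STree L)
  | .leaf => []
  | .node cs => cs

def paths : STree L → List (List L)
  | .leaf => [[]]
  | .node cs => cs.attach.flatMap (fun x => (paths x.1.2).map (fun p => x.1.1 :: p))
termination_by t => sizeOf t
decreasing_by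
  have h := List.sizeOf_lt_of_mem x.2
  obtain ⟨⟨l, c⟩, hm⟩ := x
  simp only [Prod.mk.sizeOf_spec] at h
  simp only [STree.node.sizeOf_spec]
  omega

noncomputable def tpoly (T : STree L) : MvPolynomial L ℝ :=
  ((paths T).map (fun p => (p.map X).prod)).sum

def outLabels (T : STree L) : List L := T.children.map Prod.fst

def SameStage (v w : STree L) : Prop := ∀ l, l ∈ v.outLabels ↔ l ∈ w.outLabels

inductive OccursAt : STree L → ℕ → STree L → Prop where
  | refl (T : STree L) : OccursAt T 0 T
  | child {cs : List (L × STree L)} {l : L} {c v : STree L} {n : ℕ} :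
      (l, c) ∈ cs → OccursAt c n v → OccursAt (.node cs) (n + 1) v

def IsStagedTree (T : STree L) : Prop :=
  (∀ n cs, OccursAt T n (.node cs) → cs ≠ [] ∧ (cs.map Prod.fst).Nodup) ∧
  (∀ n m v w, OccursAt T n v → OccursAt T m w →
    (SameStage v w ∨ ∀ l, ¬(l ∈ v.outLabels ∧ l ∈ w.outLabels)))

def Star (v w : STree L) : Prop :=
  ∀ l l' c c' d d', l ≠ l' →
    (l, c) ∈ v.children → (l', c') ∈ v.children →
    (l, d) ∈ w.children → (l', d') ∈ w.children →
    tpoly c * tpoly d' = tpoly d * tpoly c'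

def Balanced (T : STree L) : Prop :=
  ∀ n m v w, OccursAt T n v → OccursAt T m w → SameStage v w → Star v w

def Stratified (T : STree L) : Prop :=
  (∀ n m, OccursAt T n .leaf → OccursAt T m .leaf → n = m) ∧
  (∀ n m v w, OccursAt T n v → OccursAt T m w → SameStage v w → n = m)

end STree

namespace STree
variable {L : Type}

def trunc : ℕ → STree L → STree L
  | 0, _ => .leaf
  | _ + 1, .leaf => .leaf
  | q + 1, .node cs => .node (cs.attach.map (fun x => (x.1.1, trunc q x.1.2)))

def contract : STree L → STree L
  | .leaf => .leaf
  | .node [(_, c)] => contract c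
  | .node cs => .node (cs.attach.map (fun x => (x.1.1, contract x.1.2)))
termination_by t => sizeOf t
decreasing_by
  · simp only [STree.node.sizeOf_spec, List.cons.sizeOf_spec, Prod.mk.sizeOf_spec,
      List.nil.sizeOf_spec]
    omega
  · have h := List.sizeOf_lt_of_mem x.2
    obtain ⟨⟨l, c⟩, hm⟩ := x
    simp only [Prod.mk.sizeOf_spec] at h
    simp only [STree.node.sizeOf_spec]
    omega

def glueAux (f : List L → List L) : List L → STree L → STree L
  | pre, .leaf => .node ((f pre).map (fun l => (l, .leaf)))
  | pre, .node cs => .node (cs.attach.map (fun x => (x.1.1, glueAux f (pre ++ [x.1.1]) x.1.2)))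
termination_by _ t => sizeOf t
decreasing_by
  have h := List.sizeOf_lt_of_mem x.2
  obtain ⟨⟨l, c⟩, hm⟩ := x
  simp only [Prod.mk.sizeOf_spec] at h
  simp only [STree.node.sizeOf_spec]
  omega

def cut : ℕ → STree L → List (List L × STree L)
  | 0, t => [([], t)]
  | _ + 1, .leaf => []
  | d + 1, .node cs => cs.attach.flatMap
      (fun x => (cut d x.1.2).map (fun q => (x.1.1 :: q.1, q.2)))

def OneLevel (T : STree L) : Prop :=
  ∃ cs, T = STree.node cs ∧ cs ≠ [] ∧ ∀ p ∈ cs, p.2 = STree.leaf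

def labelSet (T : STree L) : Set L := {l | ∃ p ∈ paths T, l ∈ p}

end STree

namespace STree
variable {L : Type}

theorem occurs_trans {T u v : STree L} {m k : ℕ} (h : OccursAt T m u) (h2 : OccursAt u k v) :
    OccursAt T (m + k) v := by
  induction h with
  | refl => simpa using h2
  | @child cs l c u n h1 _ ih =>
      have := OccursAt.child h1 (ih h2)
      rwa [Nat.add_right_comm] at this

theorem occurs_child {T : STree L} {m : ℕ} {cs : List (L × STree L)} {l : L} {c : STree L}
    (h : OccursAt T m (.node cs)) (hm : (l, c) ∈ cs) : OccursAt T (m + 1) c :=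
  occurs_trans h (.child hm (.refl c))

theorem tpoly_leaf : tpoly (.leaf : STree L) = 1 := by simp [tpoly, paths]

theorem tpoly_node (cs : List (L × STree L)) :
    tpoly (.node cs) = (cs.map (fun p => X p.1 * tpoly p.2)).sum := by
  rw [tpoly, paths]
  rw [List.map_flatMap]
  rw [List.flatMap_def, List.sum_flatten, List.map_map]
  rw [← List.attach_map_val (l := cs) (f := fun p => X p.1 * tpoly p.2)]
  congr 1
  refine List.map_congr_left (fun x _ => ?_)
  simp only [Function.comp_apply, List.map_map, Function.comp_def]
  rw [tpoly, ← List.sum_map_mul_left]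
  congr 1

def IsSingle (T : STree L) (l : L) : Prop := ∃ k c, OccursAt T k (.node [(l, c)])

open scoped Classical in
noncomputable def phi (T : STree L) : MvPolynomial L ℝ →ₐ[ℝ] MvPolynomial L ℝ :=
  aeval (fun l => if IsSingle T l then 1 else X l)

theorem phi_X_single {T : STree L} {l : L} (h : IsSingle T l) : phi T (X l) = 1 := by
  classical simp only [phi, aeval_X]; rw [if_pos h]

theorem phi_X_not {T : STree L} {l : L} (h : ¬ IsSingle T l) : phi T (X l) = X l := by
  classical simp only [phi, aeval_X]; rw [if_neg h]

theorem not_single {T : STree L} (hst : IsStagedTree T) {m : ℕ} {cs : List (L × STree L)}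
    (h : OccursAt T m (.node cs)) (hlen : cs.length ≠ 1) {l : L}
    (hl : l ∈ cs.map Prod.fst) : ¬ IsSingle T l := by
  rintro ⟨k, c, hk⟩
  have hout : l ∈ outLabels (.node cs) := by simpa [outLabels, children] using hl
  rcases hst.2 m k _ _ h hk with hss | hdisj
  · rcases cs with _ | ⟨a, _ | ⟨b, t⟩⟩
    · simp at hl
    · simp at hlen
    · have ha := (hss a.1).mp (by simp [outLabels, children])
      have hb := (hss b.1).mp (by simp [outLabels, children])
      simp [outLabels, children] at ha hb
      have hnd := (hst.1 m _ h).2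
      simp [ha, hb] at hnd
  · exact hdisj l ⟨hout, by simp [outLabels, children]⟩

theorem sizeOf_mem {cs : List (L × STree L)} {p : L × STree L} (hp : p ∈ cs) :
    sizeOf p.2 < sizeOf (STree.node cs) := by
  have h := List.sizeOf_lt_of_mem hp
  obtain ⟨l, c⟩ := p
  simp only [Prod.mk.sizeOf_spec] at h
  simp only [STree.node.sizeOf_spec]
  omega

theorem contract_node_ne {cs : List (L × STree L)} (hlen : cs.length ≠ 1) :
    contract (.node cs) = .node (cs.attach.map (fun x => (x.1.1, contract x.1.2))) := by
  rcases cs with _ | ⟨a, _ | ⟨b, t⟩⟩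
  · rw [contract] <;> simp
  · simp at hlen
  · obtain ⟨l, c⟩ := a; rw [contract] <;> simp

theorem outLabels_contract_node {cs : List (L × STree L)} (hlen : cs.length ≠ 1) :
    outLabels (contract (.node cs)) = cs.map Prod.fst := by
  rw [contract_node_ne hlen]
  simp only [outLabels, children, List.map_map]
  exact List.attach_map_val (l := cs) (f := fun p => p.1)

theorem mem_contract_children {cs : List (L × STree L)} {l : L} {c : STree L}
    (hlen : cs.length ≠ 1)
    (h : (l, c) ∈ (contract (.node cs)).children) :
    ∃ c₀, (l, c₀) ∈ cs ∧ c = contract c₀ := by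
  rw [contract_node_ne hlen] at h
  simp only [children] at h
  rw [List.mem_map] at h
  obtain ⟨⟨p, hp⟩, -, heq⟩ := h
  have h1 : p.1 = l := congrArg Prod.fst heq
  have h2 : contract p.2 = c := congrArg Prod.snd heq
  exact ⟨p.2, by rw [← h1, Prod.mk.eta]; exact hp, h2.symm⟩

theorem tpoly_contract {T : STree L} (hst : IsStagedTree T) :
    ∀ (N : ℕ) (u : STree L), sizeOf u ≤ N → (∃ m, OccursAt T m u) →
      tpoly (contract u) = phi T (tpoly u) := by
  intro N
  induction N with
  | zero => intro u h; cases u <;> simp_all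
  | succ N ih =>
    rintro u hsz ⟨m, hm⟩
    match u with
    | .leaf => rw [contract]; simp [tpoly_leaf]
    | .node [(l, c)] =>
        rw [contract]
        have hsz' : sizeOf c ≤ N := by
          simp only [STree.node.sizeOf_spec, List.cons.sizeOf_spec, Prod.mk.sizeOf_spec,
            List.nil.sizeOf_spec] at hsz
          omega
        rw [ih c hsz' ⟨m + 1, occurs_child hm (show (l, c) ∈ [(l, c)] by simp)⟩]
        rw [tpoly_node]
        simp only [List.map_cons, List.map_nil, List.sum_cons, List.sum_nil, add_zero]
        rw [map_mul, phi_X_single ⟨m, c, hm⟩, one_mul]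
    | .node [] =>
        rw [contract_node_ne (by simp)]
        simp [tpoly_node]
    | .node (a :: b :: t) =>
        have hlen : (a :: b :: t).length ≠ 1 := by simp
        rw [contract_node_ne hlen, tpoly_node, tpoly_node]
        rw [map_list_sum, List.map_map, List.map_map]
        simp only [Function.comp_def]
        rw [← List.attach_map_val (l := a :: b :: t)
          (f := fun p => (phi T) (X p.1 * tpoly p.2))]
        congr 1
        refine List.map_congr_left (fun x _ => ?_)
        rw [map_mul]
        rw [phi_X_not (not_single hst hm hlen (List.mem_map_of_mem (f := Prod.fst) x.2))]
        congr 1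
        have hszx : sizeOf (x.1).2 ≤ N := by
          have := sizeOf_mem x.2
          omega
        exact ih _ hszx ⟨m + 1, occurs_child hm (by rw [Prod.mk.eta]; exact x.2)⟩

theorem normalize {T : STree L} :
    ∀ (N : ℕ) (u : STree L), sizeOf u ≤ N → (∃ m, OccursAt T m u) →
      ∃ k u', OccursAt T k u' ∧ contract u' = contract u ∧
        (u' = .leaf ∨ ∃ cs, u' = .node cs ∧ cs.length ≠ 1) := by
  intro N
  induction N with
  | zero => intro u h; cases u <;> simp_all
  | succ N ih =>
    rintro u hsz ⟨m, hm⟩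
    match u with
    | .leaf => exact ⟨m, .leaf, hm, rfl, Or.inl rfl⟩
    | .node [(l, c)] =>
        have hsz' : sizeOf c ≤ N := by
          simp only [STree.node.sizeOf_spec, List.cons.sizeOf_spec, Prod.mk.sizeOf_spec,
            List.nil.sizeOf_spec] at hsz
          omega
        obtain ⟨k, u', h1, h2, h3⟩ := ih c hsz' ⟨m + 1, occurs_child hm (show (l, c) ∈ [(l, c)] by simp)⟩
        refine ⟨k, u', h1, ?_, h3⟩
        have hcc : contract (.node [(l, c)]) = contract c := by rw [contract]
        rw [h2, hcc]
    | .node [] => exact ⟨m, .node [], hm, rfl, Or.inr ⟨[], rfl, by simp⟩⟩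
    | .node (a :: b :: t) =>
        exact ⟨m, _, hm, rfl, Or.inr ⟨a :: b :: t, rfl, by simp⟩⟩

theorem occurs_contract {T : STree L} :
    ∀ (N : ℕ) (u : STree L), sizeOf u ≤ N → (∃ m, OccursAt T m u) →
      ∀ n v, OccursAt (contract u) n v → ∃ k u₀, OccursAt T k u₀ ∧ contract u₀ = v := by
  intro N
  induction N with
  | zero => intro u h; cases u <;> simp_all
  | succ N ih =>
    rintro u hsz ⟨m, hm⟩ n v hv
    match u with
    | .leaf =>
        rw [contract] at hv
        cases hv
        exact ⟨m, .leaf, hm, by rw [contract]⟩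
    | .node [(l, c)] =>
        rw [contract] at hv
        have hsz' : sizeOf c ≤ N := by
          simp only [STree.node.sizeOf_spec, List.cons.sizeOf_spec, Prod.mk.sizeOf_spec,
            List.nil.sizeOf_spec] at hsz
          omega
        exact ih c hsz' ⟨m + 1, occurs_child hm (show (l, c) ∈ [(l, c)] by simp)⟩ n v hv
    | .node [] =>
        rw [contract_node_ne (by simp)] at hv
        simp only [List.attach_nil, List.map_nil] at hv
        cases hv with
        | refl => exact ⟨m, .node [], hm, by rw [contract_node_ne (by simp)]; simp⟩
        | child h1 h2 => simp at h1
    | .node (a :: b :: t) =>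
        have hlen : (a :: b :: t).length ≠ 1 := by simp
        rw [contract_node_ne hlen] at hv
        cases hv with
        | refl => exact ⟨m, .node (a :: b :: t), hm, by rw [contract_node_ne hlen]⟩
        | @child cs' l' c' v' n' h1 h2 =>
            simp only [List.mem_map, List.mem_attach, true_and, Subtype.exists] at h1
            obtain ⟨p, hp, heq⟩ := h1
            have hc' : c' = contract p.2 := by
              have h3 := congrArg Prod.snd heq; simpa using h3.symm
            subst hc'
            have hszp : sizeOf p.2 ≤ N := by
              have := sizeOf_mem hp; omega
            exact ih p.2 hszp ⟨m + 1, occurs_child hm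
              (by rw [Prod.mk.eta]; exact hp)⟩ n' v h2

end STree

open STree in
theorem stmt4 {L : Type} (T : STree L) (hst : IsStagedTree T)
    (hbal : Balanced T) (hS : Stratified T) :
    Balanced (contract T) := by
  intro n m v w hv hw hss
  obtain ⟨k1, u1, hu1, hcu1⟩ := occurs_contract (T := T) (sizeOf T) T le_rfl ⟨0, .refl T⟩ n v hv
  obtain ⟨k1', u1', hu1', hc1', hshape1⟩ := normalize (T := T) (sizeOf u1) u1 le_rfl ⟨k1, hu1⟩
  obtain ⟨k2, u2, hu2, hcu2⟩ := occurs_contract (T := T) (sizeOf T) T le_rfl ⟨0, .refl T⟩ m w hw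
  obtain ⟨k2', u2', hu2', hc2', hshape2⟩ := normalize (T := T) (sizeOf u2) u2 le_rfl ⟨k2, hu2⟩
  have hv' : contract u1' = v := hc1'.trans hcu1
  have hw' : contract u2' = w := hc2'.trans hcu2
  intro l l' c c' d d' hne hc hc' hd hd'
  rcases hshape1 with rfl | ⟨cs, rfl, hlen1⟩
  · rw [← hv'] at hc
    rw [show contract (.leaf : STree L) = .leaf by rw [contract]] at hc
    simp [children] at hc
  rcases hshape2 with rfl | ⟨ds, rfl, hlen2⟩
  · rw [← hw'] at hd
    rw [show contract (.leaf : STree L) = .leaf by rw [contract]] at hd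
    simp [children] at hd
  rw [← hv'] at hc hc'
  rw [← hw'] at hd hd'
  obtain ⟨c0, hc0, rfl⟩ := mem_contract_children hlen1 hc
  obtain ⟨c0', hc0', rfl⟩ := mem_contract_children hlen1 hc'
  obtain ⟨d0, hd0, rfl⟩ := mem_contract_children hlen2 hd
  obtain ⟨d0', hd0', rfl⟩ := mem_contract_children hlen2 hd'
  have hout1 : outLabels (STree.node cs) = outLabels v := by
    rw [← hv', outLabels_contract_node hlen1]; rfl
  have hout2 : outLabels (STree.node ds) = outLabels w := by
    rw [← hw', outLabels_contract_node hlen2]; rfl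
  have hssu : SameStage (STree.node cs) (STree.node ds) := by
    intro x
    rw [hout1, hout2]
    exact hss x
  have heq := hbal k1' k2' _ _ hu1' hu2' hssu l l' c0 c0' d0 d0' hne hc0 hc0' hd0 hd0'
  have e1 := tpoly_contract hst (sizeOf c0) c0 le_rfl ⟨k1' + 1, occurs_child hu1' hc0⟩
  have e2 := tpoly_contract hst (sizeOf c0') c0' le_rfl ⟨k1' + 1, occurs_child hu1' hc0'⟩
  have e3 := tpoly_contract hst (sizeOf d0) d0 le_rfl ⟨k2' + 1, occurs_child hu2' hd0⟩
  have e4 := tpoly_contract hst (sizeOf d0') d0' le_rfl ⟨k2' + 1, occurs_child hu2' hd0'⟩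
  rw [e1, e2, e3, e4, ← map_mul, ← map_mul, heq]
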